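/- Let μ : ℝ≥0 → ℝ≥0 be non-increasing, let (ε_v)_{v∈V} and ε_∅ be i.i.d. real random variables, and define f(S,u) = P( max_{v∈S} (μ(d(v,u)) + ε_v) > ε_∅ ) for subsets S of a finite metric space V and a fixed point u, with f(∅,u) = 0. Then f(·, u) is a monotone submodular set function on 2^V. -/

import Mathlib

open MeasureTheory ProbabilityTheory Finset

/-- The conversion function
f(S,u) = P(max_{v∈S}(μ(d(v,u)) + ε_v) > ε_∅) of a random utility model with
i.i.d. noise terms is a monotone submodular set function (f(∅,u)=0). -/
theorem stmt_13 {𝓜 : Type*} [MetricSpace 𝓜] [DecidableEq 𝓜]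
    (V : Finset 𝓜) (u : 𝓜)
    (μutil : ℝ → ℝ) (hμ0 : ∀ x, 0 ≤ x → 0 ≤ μutil x)
    (hμmono : ∀ x y, 0 ≤ x → x ≤ y → μutil y ≤ μutil x)
    {Ω : Type*} [MeasurableSpace Ω] (P : Measure Ω) [IsProbabilityMeasure P]
    -- the noise terms: ε (some v) is ε_v for v ∈ V, and ε none is ε_∅
    (ε : Option ↥V → Ω → ℝ)
    (hεmeas : ∀ i, Measurable (ε i))
    (hindep : iIndepFun ε P)
    (hident : ∀ i j, Measure.map (ε i) P = Measure.map (ε j) P)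
    (f : Finset ↥V → ℝ)
    (hf : ∀ S : Finset ↥V,
      f S = (P {ω | ∃ v ∈ S, μutil (dist (v : 𝓜) u) + ε (some v) ω >
        ε none ω}).toReal) :
    (∀ A B : Finset ↥V, A ⊆ B → f A ≤ f B) ∧
    (∀ A B : Finset ↥V, A ⊆ B → ∀ v ∉ B,
      f (insert v B) - f B ≤ f (insert v A) - f A) := by
  classical
  set E : Finset ↥V → Set Ω :=
    fun S => {ω | ∃ v ∈ S, μutil (dist (v : 𝓜) u) + ε (some v) ω > ε none ω} with hE
  set D : ↥V → Set Ω :=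
    fun v => {ω | μutil (dist (v : 𝓜) u) + ε (some v) ω > ε none ω} with hD
  have hmeasD : ∀ v : ↥V, MeasurableSet (D v) := fun v =>
    measurableSet_lt (hεmeas none) (measurable_const.add (hεmeas (some v)))
  have hEeq : ∀ S, E S = ⋃ v ∈ S, D v := by
    intro S; ext ω; simp [hE, hD]
  have hEmeas : ∀ S, MeasurableSet (E S) := fun S => by
    rw [hEeq]; exact S.measurableSet_biUnion (fun v _ => hmeasD v)
  have hEmono : ∀ {A B : Finset ↥V}, A ⊆ B → E A ⊆ E B := by
    intro A B hAB ω hω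
    obtain ⟨v, hv, h⟩ := hω
    exact ⟨v, hAB hv, h⟩
  have hfE : ∀ S, f S = (P (E S)).toReal := hf
  constructor
  · intro A B hAB
    rw [hfE, hfE]
    exact ENNReal.toReal_mono (measure_ne_top P _) (measure_mono (hEmono hAB))
  · intro A B hAB v hv
    have key : ∀ S : Finset ↥V, f (insert v S) - f S = (P (D v \ E S)).toReal := by
      intro S
      have hins : E (insert v S) = E S ∪ (D v \ E S) := by
        ext ω
        simp only [hE, hD, Set.mem_setOf_eq, Set.mem_union, Set.mem_diff,
          Finset.mem_insert]
        constructor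
        · rintro ⟨w, (rfl | hw), h⟩
          · by_cases hωS : ∃ w ∈ S, μutil (dist (w : 𝓜) u) + ε (some w) ω > ε none ω
            · exact Or.inl hωS
            · exact Or.inr ⟨h, hωS⟩
          · exact Or.inl ⟨w, hw, h⟩
        · rintro (⟨w, hw, h⟩ | ⟨h, _⟩)
          · exact ⟨w, Or.inr hw, h⟩
          · exact ⟨v, Or.inl rfl, h⟩
      have hdisj : Disjoint (E S) (D v \ E S) :=
        Set.disjoint_left.mpr fun ω hωS hωD => hωD.2 hωS
      rw [hfE, hfE, hins, measure_union hdisj ((hmeasD v).diff (hEmeas S)),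
        ENNReal.toReal_add (measure_ne_top P _) (measure_ne_top P _)]
      ring
    rw [key A, key B]
    exact ENNReal.toReal_mono (measure_ne_top P _)
      (measure_mono (Set.diff_subset_diff_right (hEmono hAB)))
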